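/- Let δ > 0, let g_1, g_2 ∈ D([a,b],ℝ^d) and h_1, h_2 ∈ D([a,b+δ],ℝ^d) be càdlàg, and suppose h_i = g_i ∘ ρ_i for some continuous increasing bijections ρ_i : [a,b+δ] → [a,b], i = 1,2. Then |σ_∞(g_1,g_2) − σ_∞(h_1,h_2)| ≤ disc(ρ_1) + disc(ρ_2), where σ_∞ denotes the Skorokhod J1 metric on D([a,b],ℝ^d) and on D([a,b+δ],ℝ^d) respectively. Moreover, if in addition all of g_1, g_2, h_1, h_2 have finite p-variation for some p ∈ [1,∞), then the same inequality holds with σ_∞ replaced by σ_{p-var}. -/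

import Mathlib

open scoped ENNReal
open Set

/-- The `p`-variation semi-norm of `f : [a,b] → ℝ^d` (valued in `ℝ≥0∞`). -/
noncomputable def pVar {d : ℕ} (p : ℝ) (f : ℝ → EuclideanSpace ℝ (Fin d)) (a b : ℝ) : ℝ≥0∞ :=
  ⨆ (k : ℕ) (t : ℕ → ℝ) (_ : t 0 = a) (_ : t k = b)
      (_ : ∀ j < k, t j < t (j + 1)),
    (∑ j ∈ Finset.range k, ENNReal.ofReal ‖f (t (j + 1)) - f (t j)‖ ^ p) ^ (1 / p)

/-- `ρ` restricts to a continuous increasing bijection from `[a,b]` onto `[c,d]`. -/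
def IsReparTo (a b c d : ℝ) (ρ : ℝ → ℝ) : Prop :=
  ContinuousOn ρ (Set.Icc a b) ∧ StrictMonoOn ρ (Set.Icc a b) ∧
    ρ '' Set.Icc a b = Set.Icc c d

/-- `disc(ρ) = sup_{x ∈ [a,b]} |ρ x - x|`. -/
noncomputable def disc (a b : ℝ) (ρ : ℝ → ℝ) : ℝ≥0∞ :=
  ⨆ x ∈ Set.Icc a b, ENNReal.ofReal |ρ x - x|

/-- The Skorokhod `J1` metric on `D([a,b],ℝ^d)`:
`σ_∞(g,h) = inf_ρ max{ sup|ρ x - x| , sup|g(ρ x) - h x| }`. -/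
noncomputable def sigmaJ1 {d : ℕ} (a b : ℝ) (g h : ℝ → EuclideanSpace ℝ (Fin d)) : ℝ≥0∞ :=
  ⨅ (ρ : ℝ → ℝ) (_ : IsReparTo a b a b ρ),
    max (disc a b ρ) (⨆ x ∈ Set.Icc a b, ENNReal.ofReal ‖g (ρ x) - h x‖)

/-- `σ_{p-var}(g,h) = inf_ρ max{ disc ρ, ‖g∘ρ − h‖_{p-var} }`, with
`‖f‖_{p-var} = |f(a)| + |f|_{p-var}`. -/
noncomputable def sigmaPVar {d : ℕ} (p : ℝ) (a b : ℝ)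
    (g h : ℝ → EuclideanSpace ℝ (Fin d)) : ℝ≥0∞ :=
  ⨅ (ρ : ℝ → ℝ) (_ : IsReparTo a b a b ρ),
    max (disc a b ρ)
      (ENNReal.ofReal ‖g (ρ a) - h a‖ + pVar p (fun x => g (ρ x) - h x) a b)

/-- `f` is càdlàg on `[a,b]`: right-continuous on `[a,b)` and with left limits on `(a,b]`
(limits taken within the interval). -/
def Cadlag {d : ℕ} (a b : ℝ) (f : ℝ → EuclideanSpace ℝ (Fin d)) : Prop :=
  (∀ t ∈ Set.Ico a b, Filter.Tendsto f (nhdsWithin t (Set.Ioc t b)) (nhds (f t))) ∧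
  (∀ t ∈ Set.Ioc a b, ∃ l, Filter.Tendsto f (nhdsWithin t (Set.Ico a t)) (nhds l))

lemma chain_mono {t : ℕ → ℝ} {k : ℕ} (h : ∀ j < k, t j < t (j+1)) :
    ∀ i j, i ≤ j → j ≤ k → t i ≤ t j := by
  intro i j hij hjk
  induction j with
  | zero => simp [Nat.le_zero.mp hij]
  | succ n ih =>
    rcases Nat.lt_or_ge i (n+1) with h' | h'
    · exact le_trans (ih (Nat.lt_succ_iff.mp h') (le_trans (Nat.le_succ n) hjk))
        (le_of_lt (h n (by omega)))
    · have : i = n + 1 := le_antisymm hij h'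
      simp [this]

lemma chain_mem {t : ℕ → ℝ} {k : ℕ} {a b : ℝ} (h0 : t 0 = a) (hk : t k = b)
    (h : ∀ j < k, t j < t (j+1)) {j : ℕ} (hj : j ≤ k) : t j ∈ Icc a b := by
  constructor
  · rw [← h0]; exact chain_mono h 0 j (Nat.zero_le _) hj
  · rw [← hk]; exact chain_mono h j k hj le_rfl

lemma pVar_congr_le {d : ℕ} (p : ℝ) {f g : ℝ → EuclideanSpace ℝ (Fin d)} {a b : ℝ}
    (h : ∀ x ∈ Icc a b, f x = g x) : pVar p f a b ≤ pVar p g a b := by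
  refine iSup_le fun k => iSup_le fun t => iSup_le fun h0 => iSup_le fun hk =>
    iSup_le fun hinc => ?_
  refine le_iSup_of_le k <| le_iSup_of_le t <| le_iSup_of_le h0 <| le_iSup_of_le hk <|
    le_iSup_of_le hinc <| le_of_eq ?_
  congr 1
  refine Finset.sum_congr rfl fun j hj => ?_
  have hj' := Finset.mem_range.mp hj
  rw [h _ (chain_mem h0 hk hinc (by omega)), h _ (chain_mem h0 hk hinc (by omega))]

lemma pVar_congr {d : ℕ} (p : ℝ) {f g : ℝ → EuclideanSpace ℝ (Fin d)} {a b : ℝ}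
    (h : ∀ x ∈ Icc a b, f x = g x) : pVar p f a b = pVar p g a b :=
  le_antisymm (pVar_congr_le p h) (pVar_congr_le p fun x hx => (h x hx).symm)

lemma pVar_comp_le {d : ℕ} (p : ℝ) (F : ℝ → EuclideanSpace ℝ (Fin d)) (ρ : ℝ → ℝ)
    {a b c e : ℝ} (hmono : StrictMonoOn ρ (Icc a b)) (hac : ρ a = c) (hbe : ρ b = e) :
    pVar p (fun x => F (ρ x)) a b ≤ pVar p F c e := by
  refine iSup_le fun k => iSup_le fun t => iSup_le fun h0 => iSup_le fun hk =>
    iSup_le fun hinc => ?_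
  refine le_iSup_of_le k <| le_iSup_of_le (fun j => ρ (t j)) <|
    le_iSup_of_le (by simp only []; rw [h0, hac]) <| le_iSup_of_le (by simp only []; rw [hk, hbe]) <|
    le_iSup_of_le (fun j hj => hmono (chain_mem h0 hk hinc (by omega))
      (chain_mem h0 hk hinc (by omega)) (hinc j hj)) le_rfl

lemma IsReparTo.mapsTo {a b c d : ℝ} {ρ : ℝ → ℝ} (h : IsReparTo a b c d ρ) :
    MapsTo ρ (Icc a b) (Icc c d) := h.2.2 ▸ mapsTo_image ρ _

lemma IsReparTo.left {a b c d : ℝ} {ρ : ℝ → ℝ} (hab : a ≤ b) (h : IsReparTo a b c d ρ) :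
    ρ a = c := by
  have hmem : ρ a ∈ Icc c d := h.mapsTo (left_mem_Icc.mpr hab)
  have hcd : c ≤ d := by
    have : (Icc c d).Nonempty := h.2.2 ▸ (nonempty_Icc.mpr hab).image ρ
    exact nonempty_Icc.mp this
  obtain ⟨x, hx, hxc⟩ : c ∈ ρ '' Icc a b := h.2.2 ▸ left_mem_Icc.mpr hcd
  refine le_antisymm ?_ hmem.1
  calc ρ a ≤ ρ x := h.2.1.monotoneOn (left_mem_Icc.mpr hab) hx hx.1
  _ = c := hxc

lemma IsReparTo.right {a b c d : ℝ} {ρ : ℝ → ℝ} (hab : a ≤ b) (h : IsReparTo a b c d ρ) :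
    ρ b = d := by
  have hmem : ρ b ∈ Icc c d := h.mapsTo (right_mem_Icc.mpr hab)
  have hcd : c ≤ d := by
    have : (Icc c d).Nonempty := h.2.2 ▸ (nonempty_Icc.mpr hab).image ρ
    exact nonempty_Icc.mp this
  obtain ⟨x, hx, hxd⟩ : d ∈ ρ '' Icc a b := h.2.2 ▸ right_mem_Icc.mpr hcd
  refine le_antisymm hmem.2 ?_
  calc d = ρ x := hxd.symm
  _ ≤ ρ b := h.2.1.monotoneOn hx (right_mem_Icc.mpr hab) hx.2

lemma IsReparTo.comp {a b c d e f : ℝ} {ρ τ : ℝ → ℝ}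
    (hρ : IsReparTo a b c d ρ) (hτ : IsReparTo c d e f τ) :
    IsReparTo a b e f (fun x => τ (ρ x)) := by
  refine ⟨hτ.1.comp hρ.1 hρ.mapsTo, fun x hx y hy hxy => hτ.2.1 (hρ.mapsTo hx) (hρ.mapsTo hy)
    (hρ.2.1 hx hy hxy), ?_⟩
  rw [show (fun x => τ (ρ x)) = τ ∘ ρ from rfl, image_comp, hρ.2.2, hτ.2.2]

lemma IsReparTo.exists_inv {a b c d : ℝ} {ρ : ℝ → ℝ} (hab : a ≤ b)
    (h : IsReparTo a b c d ρ) :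
    ∃ ι : ℝ → ℝ, IsReparTo c d a b ι ∧ (∀ y ∈ Icc c d, ρ (ι y) = y) ∧
      (∀ x ∈ Icc a b, ι (ρ x) = x) := by
  have hcd : c ≤ d := by
    have : (Icc c d).Nonempty := h.2.2 ▸ (nonempty_Icc.mpr hab).image ρ
    exact nonempty_Icc.mp this
  -- bundle ρ as an order iso between the subtypes
  let F : Icc a b → Icc c d := fun x => ⟨ρ x, h.mapsTo x.2⟩
  have hFmono : StrictMono F := fun x y hxy => Subtype.coe_lt_coe.mp (h.2.1 x.2 y.2 hxy)
  have hFsurj : Function.Surjective F := by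
    rintro ⟨y, hy⟩
    obtain ⟨x, hx, hxy⟩ : y ∈ ρ '' Icc a b := h.2.2 ▸ hy
    exact ⟨⟨x, hx⟩, Subtype.ext hxy⟩
  let e : Icc a b ≃o Icc c d := StrictMono.orderIsoOfSurjective F hFmono hFsurj
  have he : ∀ x : Icc a b, e x = F x := fun x =>
    congrFun (StrictMono.coe_orderIsoOfSurjective F hFmono hFsurj) x
  let ι : ℝ → ℝ := fun y => if hy : y ∈ Icc c d then (e.symm ⟨y, hy⟩ : ℝ) else y
  have hι : ∀ y (hy : y ∈ Icc c d), ι y = (e.symm ⟨y, hy⟩ : ℝ) := fun y hy => dif_pos hy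
  have hright : ∀ y ∈ Icc c d, ρ (ι y) = y := by
    intro y hy
    rw [hι y hy]
    have := he (e.symm ⟨y, hy⟩)
    rw [e.apply_symm_apply] at this
    exact congrArg Subtype.val this.symm
  have hmem : ∀ y ∈ Icc c d, ι y ∈ Icc a b := by
    intro y hy; rw [hι y hy]; exact (e.symm ⟨y, hy⟩).2
  have hinj : InjOn ρ (Icc a b) := h.2.1.injOn
  have hleft : ∀ x ∈ Icc a b, ι (ρ x) = x := by
    intro x hx
    exact hinj (hmem _ (h.mapsTo hx)) hx (hright _ (h.mapsTo hx))
  refine ⟨ι, ⟨?_, ?_, ?_⟩, hright, hleft⟩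
  · -- continuity: ι restricted to Icc c d equals val ∘ e.symm ∘ inclusion
    rw [continuousOn_iff_continuous_restrict]
    have : (Icc c d).restrict ι = fun y : Icc c d => (e.symm y : ℝ) := by
      funext y
      exact hι y y.2
    rw [show (Icc c d).domRestrict ι = fun y : Icc c d => (e.symm y : ℝ) from this]
    exact continuous_subtype_val.comp e.symm.continuous
  · intro y hy z hz hyz
    rw [hι y hy, hι z hz]
    exact Subtype.coe_lt_coe.mpr (e.symm.strictMono (Subtype.mk_lt_mk.mpr hyz))
  · apply Subset.antisymm
    · rintro _ ⟨y, hy, rfl⟩; exact hmem y hy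
    · intro x hx
      exact ⟨ρ x, h.mapsTo hx, hleft x hx⟩

lemma disc_inv {a b c d : ℝ} {ρ ι : ℝ → ℝ} (hmem : ∀ y ∈ Icc c d, ι y ∈ Icc a b)
    (hright : ∀ y ∈ Icc c d, ρ (ι y) = y) : disc c d ι ≤ disc a b ρ := by
  refine iSup₂_le fun y hy => ?_
  have h1 : |ι y - y| = |ρ (ι y) - ι y| := by rw [hright y hy, abs_sub_comm]
  rw [h1]
  exact le_iSup₂ (f := fun x (_ : x ∈ Icc a b) => ENNReal.ofReal |ρ x - x|) _ (hmem y hy)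

lemma disc_comp_le {a u v : ℝ} (hau : a ≤ u) (hav : a ≤ v) {lam τ₁ τ₂ ι₂ : ℝ → ℝ}
    (hlam : IsReparTo a v a v lam)
    (hι₂ : IsReparTo a u a v ι₂)
    (hι₂τ₂ : ∀ y ∈ Icc a u, τ₂ (ι₂ y) = y) :
    disc a u (fun y => τ₁ (lam (ι₂ y))) ≤
      disc a v lam + (disc a v τ₁ + disc a v τ₂) := by
  refine iSup₂_le fun y hy => ?_
  set x := ι₂ y with hxdef
  have hx : x ∈ Icc a v := hι₂.mapsTo hy
  have hlx : lam x ∈ Icc a v := hlam.mapsTo hx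
  have hy' : y = τ₂ x := (hι₂τ₂ y hy).symm
  have habs : |τ₁ (lam x) - y| ≤ |lam x - x| + (|τ₁ (lam x) - lam x| + |τ₂ x - x|) := by
    rw [hy']
    calc |τ₁ (lam x) - τ₂ x| ≤ |τ₁ (lam x) - lam x| + |lam x - τ₂ x| := abs_sub_le _ _ _
    _ ≤ |τ₁ (lam x) - lam x| + (|lam x - x| + |x - τ₂ x|) := by
        gcongr; exact abs_sub_le _ _ _
    _ = |lam x - x| + (|τ₁ (lam x) - lam x| + |τ₂ x - x|) := by
        rw [abs_sub_comm x (τ₂ x)]; ring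
  calc ENNReal.ofReal |τ₁ (lam x) - y|
      ≤ ENNReal.ofReal (|lam x - x| + (|τ₁ (lam x) - lam x| + |τ₂ x - x|)) :=
        ENNReal.ofReal_le_ofReal habs
    _ ≤ ENNReal.ofReal |lam x - x| +
        (ENNReal.ofReal |τ₁ (lam x) - lam x| + ENNReal.ofReal |τ₂ x - x|) := by
        calc ENNReal.ofReal (|lam x - x| + (|τ₁ (lam x) - lam x| + |τ₂ x - x|))
            ≤ _ := ENNReal.ofReal_add_le
          _ ≤ _ := by gcongr; exact ENNReal.ofReal_add_le
    _ ≤ disc a v lam + (disc a v τ₁ + disc a v τ₂) := by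
        gcongr
        · exact le_iSup₂ (f := fun z (_ : z ∈ Icc a v) => ENNReal.ofReal |lam z - z|) _ hx
        · exact le_iSup₂ (f := fun z (_ : z ∈ Icc a v) => ENNReal.ofReal |τ₁ z - z|) _ hlx
        · exact le_iSup₂ (f := fun z (_ : z ∈ Icc a v) => ENNReal.ofReal |τ₂ z - z|) _ hx

lemma key_J1 {d : ℕ} {a u v : ℝ} (hau : a ≤ u) (hav : a ≤ v)
    (G₁ G₂ H₁ H₂ : ℝ → EuclideanSpace ℝ (Fin d)) (τ₁ τ₂ : ℝ → ℝ)
    (hτ₁ : IsReparTo a v a u τ₁) (hτ₂ : IsReparTo a v a u τ₂)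
    (hc₁ : ∀ x ∈ Icc a v, H₁ x = G₁ (τ₁ x)) (hc₂ : ∀ x ∈ Icc a v, H₂ x = G₂ (τ₂ x)) :
    sigmaJ1 a u G₁ G₂ ≤ sigmaJ1 a v H₁ H₂ + disc a v τ₁ + disc a v τ₂ := by
  obtain ⟨ι₂, hι₂, hr₂, hl₂⟩ := hτ₂.exists_inv hav
  rw [add_assoc]
  conv_rhs => rw [sigmaJ1]
  rw [ENNReal.iInf_add]
  refine le_iInf fun lam => ?_
  rw [ENNReal.iInf_add]
  refine le_iInf fun hlam => ?_
  set μ : ℝ → ℝ := fun y => τ₁ (lam (ι₂ y)) with hμdef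
  have hμ : IsReparTo a u a u μ := (hι₂.comp hlam).comp hτ₁
  refine le_trans (iInf_le_of_le μ (iInf_le _ hμ)) ?_
  refine max_le ?_ ?_
  · refine le_trans (disc_comp_le hau hav hlam hι₂ hr₂) ?_
    gcongr
    exact le_max_left _ _
  · refine le_trans ?_ le_self_add
    refine le_trans ?_ (le_max_right _ _)
    refine iSup₂_le fun y hy => ?_
    have hx : ι₂ y ∈ Icc a v := hι₂.mapsTo hy
    have hlx : lam (ι₂ y) ∈ Icc a v := hlam.mapsTo hx
    have e1 : G₁ (μ y) = H₁ (lam (ι₂ y)) := (hc₁ _ hlx).symm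
    have e2 : G₂ y = H₂ (ι₂ y) := by
      rw [hc₂ _ hx, hr₂ y hy]
    rw [e1, e2]
    exact le_iSup₂ (f := fun z (_ : z ∈ Icc a v) =>
      ENNReal.ofReal ‖H₁ (lam z) - H₂ z‖) _ hx

lemma key_PVar {d : ℕ} {p : ℝ} {a u v : ℝ} (hau : a ≤ u) (hav : a ≤ v)
    (G₁ G₂ H₁ H₂ : ℝ → EuclideanSpace ℝ (Fin d)) (τ₁ τ₂ : ℝ → ℝ)
    (hτ₁ : IsReparTo a v a u τ₁) (hτ₂ : IsReparTo a v a u τ₂)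
    (hc₁ : ∀ x ∈ Icc a v, H₁ x = G₁ (τ₁ x)) (hc₂ : ∀ x ∈ Icc a v, H₂ x = G₂ (τ₂ x)) :
    sigmaPVar p a u G₁ G₂ ≤ sigmaPVar p a v H₁ H₂ + disc a v τ₁ + disc a v τ₂ := by
  obtain ⟨ι₂, hι₂, hr₂, hl₂⟩ := hτ₂.exists_inv hav
  rw [add_assoc]
  conv_rhs => rw [sigmaPVar]
  rw [ENNReal.iInf_add]
  refine le_iInf fun lam => ?_
  rw [ENNReal.iInf_add]
  refine le_iInf fun hlam => ?_
  set μ : ℝ → ℝ := fun y => τ₁ (lam (ι₂ y)) with hμdef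
  have hμ : IsReparTo a u a u μ := (hι₂.comp hlam).comp hτ₁
  refine le_trans (iInf_le_of_le μ (iInf_le _ hμ)) ?_
  refine max_le ?_ ?_
  · refine le_trans (disc_comp_le hau hav hlam hι₂ hr₂) ?_
    gcongr
    exact le_max_left _ _
  · refine le_trans ?_ le_self_add
    refine le_trans ?_ (le_max_right _ _)
    have hagree : ∀ y ∈ Icc a u, G₁ (μ y) - G₂ y =
        H₁ (lam (ι₂ y)) - H₂ (ι₂ y) := by
      intro y hy
      have hx : ι₂ y ∈ Icc a v := hι₂.mapsTo hy
      have hlx : lam (ι₂ y) ∈ Icc a v := hlam.mapsTo hx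
      have e1 : G₁ (μ y) = H₁ (lam (ι₂ y)) := (hc₁ _ hlx).symm
      have e2 : G₂ y = H₂ (ι₂ y) := by rw [hc₂ _ hx, hr₂ y hy]
      rw [e1, e2]
    gcongr
    · -- endpoint terms
      have h0 := hagree a (left_mem_Icc.mpr hau)
      rw [show G₁ (μ a) - G₂ a = H₁ (lam (ι₂ a)) - H₂ (ι₂ a) from h0, hι₂.left hau]
    · -- pVar terms
      calc pVar p (fun y => G₁ (μ y) - G₂ y) a u
          = pVar p (fun y => H₁ (lam (ι₂ y)) - H₂ (ι₂ y)) a u :=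
            pVar_congr p hagree
        _ ≤ pVar p (fun x => H₁ (lam x) - H₂ x) a v :=
            pVar_comp_le p (fun x => H₁ (lam x) - H₂ x) ι₂ hι₂.2.1
              (hι₂.left hau) (hι₂.right hau)

/-- If `h_i = g_i ∘ ρ_i` for continuous increasing bijections
`ρ_i : [a,b+δ] → [a,b]`, then the Skorokhod `J1` distances of the pairs differ by at most
`disc ρ₁ + disc ρ₂`, and likewise for the `p`-variation Skorokhod distances when all four
paths have finite `p`-variation. -/
theorem stmt3 {d : ℕ} (a b δ : ℝ) (hab : a < b) (hδ : 0 < δ)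
    (g₁ g₂ h₁ h₂ : ℝ → EuclideanSpace ℝ (Fin d))
    (ρ₁ ρ₂ : ℝ → ℝ)
    (hg₁ : Cadlag a b g₁) (hg₂ : Cadlag a b g₂)
    (hh₁ : Cadlag a (b + δ) h₁) (hh₂ : Cadlag a (b + δ) h₂)
    (hρ₁ : IsReparTo a (b + δ) a b ρ₁) (hρ₂ : IsReparTo a (b + δ) a b ρ₂)
    (hcomp₁ : ∀ x ∈ Set.Icc a (b + δ), h₁ x = g₁ (ρ₁ x))
    (hcomp₂ : ∀ x ∈ Set.Icc a (b + δ), h₂ x = g₂ (ρ₂ x)) :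
    (sigmaJ1 a b g₁ g₂ ≤ sigmaJ1 a (b + δ) h₁ h₂ + disc a (b + δ) ρ₁ + disc a (b + δ) ρ₂
      ∧ sigmaJ1 a (b + δ) h₁ h₂ ≤ sigmaJ1 a b g₁ g₂ + disc a (b + δ) ρ₁ + disc a (b + δ) ρ₂)
    ∧ ∀ p : ℝ, 1 ≤ p →
        pVar p g₁ a b < ⊤ → pVar p g₂ a b < ⊤ →
        pVar p h₁ a (b + δ) < ⊤ → pVar p h₂ a (b + δ) < ⊤ →
        (sigmaPVar p a b g₁ g₂
            ≤ sigmaPVar p a (b + δ) h₁ h₂ + disc a (b + δ) ρ₁ + disc a (b + δ) ρ₂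
          ∧ sigmaPVar p a (b + δ) h₁ h₂
            ≤ sigmaPVar p a b g₁ g₂ + disc a (b + δ) ρ₁ + disc a (b + δ) ρ₂) := by
  have hab' : a ≤ b := hab.le
  have habd : a ≤ b + δ := by linarith
  obtain ⟨ι₁, hι₁, hr₁, hl₁⟩ := hρ₁.exists_inv habd
  obtain ⟨ι₂, hι₂, hr₂, hl₂⟩ := hρ₂.exists_inv habd
  have hcg₁ : ∀ y ∈ Icc a b, g₁ y = h₁ (ι₁ y) := by
    intro y hy
    rw [hcomp₁ _ (hι₁.mapsTo hy), hr₁ y hy]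
  have hcg₂ : ∀ y ∈ Icc a b, g₂ y = h₂ (ι₂ y) := by
    intro y hy
    rw [hcomp₂ _ (hι₂.mapsTo hy), hr₂ y hy]
  have hd₁ : disc a b ι₁ ≤ disc a (b + δ) ρ₁ := disc_inv (fun y hy => hι₁.mapsTo hy) hr₁
  have hd₂ : disc a b ι₂ ≤ disc a (b + δ) ρ₂ := disc_inv (fun y hy => hι₂.mapsTo hy) hr₂
  constructor
  · constructor
    · exact key_J1 hab' habd g₁ g₂ h₁ h₂ ρ₁ ρ₂ hρ₁ hρ₂ hcomp₁ hcomp₂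
    · refine le_trans (key_J1 habd hab' h₁ h₂ g₁ g₂ ι₁ ι₂ hι₁ hι₂ hcg₁ hcg₂) ?_
      gcongr
  · intro p _ _ _ _ _
    constructor
    · exact key_PVar hab' habd g₁ g₂ h₁ h₂ ρ₁ ρ₂ hρ₁ hρ₂ hcomp₁ hcomp₂
    · refine le_trans (key_PVar habd hab' h₁ h₂ g₁ g₂ ι₁ ι₂ hι₁ hι₂ hcg₁ hcg₂) ?_
      gcongr
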